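/- Let D > 0, 0 ≤ α < 1, and 0 < β ≤ 1 be reals, let k ≥ 1 be an integer, and let s : {1, …, k} → ℕ satisfy (D+1)·(s(t)+1) ≥ t for all 1 ≤ t ≤ k. Then ∑_{t=1}^{k} t^β/(s(t)+1)^{1−α} ≤ (D+1)^{1−α}·(k^{α+β}/(α+β) + k^{α+β−1}). -/
import Mathlib

open Real Finset

private lemma bern_le {x γ : ℝ} (hx : 1 ≤ x) (hγ0 : 0 < γ) (hγ1 : γ ≤ 1) :
    γ * x ^ (γ - 1) ≤ x ^ γ - (x - 1) ^ γ := by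
  have hx0 : 0 < x := lt_of_lt_of_le one_pos hx
  have h1x : 1 / x ≤ 1 := by rw [div_le_one hx0]; exact hx
  have hb : (1 + -(1/x)) ^ γ ≤ 1 + γ * -(1/x) :=
    rpow_one_add_le_one_add_mul_self (by linarith) hγ0.le hγ1
  have hxm : x - 1 = x * (1 + -(1/x)) := by field_simp; ring
  have hnn : 0 ≤ 1 + -(1/x) := by
    have : 0 < 1 / x := by positivity
    linarith
  have hmul : (x - 1) ^ γ = x ^ γ * (1 + -(1/x)) ^ γ := by
    rw [hxm, Real.mul_rpow hx0.le hnn]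
  have hxγ : (0:ℝ) ≤ x ^ γ := (Real.rpow_pos_of_pos hx0 γ).le
  have h2 : (x - 1) ^ γ ≤ x ^ γ * (1 + γ * -(1/x)) := by
    rw [hmul]; exact mul_le_mul_of_nonneg_left hb hxγ
  have h3 : x ^ γ * (1/x) = x ^ (γ - 1) := by
    rw [Real.rpow_sub hx0, Real.rpow_one]; ring
  nlinarith [h2, h3]

private lemma bern_ge {x γ : ℝ} (hx : 1 ≤ x) (hγ : 1 ≤ γ) :
    γ * x ^ (γ - 1) ≤ (x + 1) ^ γ - x ^ γ := by
  have hx0 : 0 < x := lt_of_lt_of_le one_pos hx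
  have hb : 1 + γ * (1/x) ≤ (1 + 1/x) ^ γ :=
    one_add_mul_self_le_rpow_one_add (by linarith [one_div_pos.mpr hx0]) hγ
  have hxm : x + 1 = x * (1 + 1/x) := by field_simp
  have hnn : (0:ℝ) ≤ 1 + 1/x := by positivity
  have hmul : (x + 1) ^ γ = x ^ γ * (1 + 1/x) ^ γ := by
    rw [hxm, Real.mul_rpow hx0.le hnn]
  have hxγ : (0:ℝ) ≤ x ^ γ := (Real.rpow_pos_of_pos hx0 γ).le
  have h2 : x ^ γ * (1 + γ * (1/x)) ≤ (x + 1) ^ γ := by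
    rw [hmul]; exact mul_le_mul_of_nonneg_left hb hxγ
  have h3 : x ^ γ * (1/x) = x ^ (γ - 1) := by
    rw [Real.rpow_sub hx0, Real.rpow_one]; ring
  nlinarith [h2, h3]

private lemma sum_rpow_aux (γ : ℝ) (hγ0 : 0 < γ) (k : ℕ) (hk : 1 ≤ k) :
    ∑ t ∈ Finset.Icc 1 k, (t : ℝ) ^ (γ - 1) ≤ (k : ℝ) ^ γ / γ + (k : ℝ) ^ (γ - 1) := by
  have hk0 : (0:ℝ) < (k:ℝ) := by exact_mod_cast hk
  rcases le_total γ 1 with hγ1 | hγ1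
  · -- decreasing case: term t ≤ (t^γ - (t-1)^γ)/γ
    have hsum : ∑ t ∈ Finset.Icc 1 k, (t : ℝ) ^ (γ - 1) ≤
        ∑ t ∈ Finset.Icc 1 k, ((t : ℝ) ^ γ - ((t:ℝ) - 1) ^ γ) / γ := by
      apply Finset.sum_le_sum
      intro t ht
      have ht1 : 1 ≤ t := (Finset.mem_Icc.mp ht).1
      have hx : (1:ℝ) ≤ (t:ℝ) := by exact_mod_cast ht1
      rw [le_div_iff₀ hγ0]
      have := bern_le hx hγ0 hγ1
      linarith
    have htel : ∑ t ∈ Finset.Icc 1 k, ((t : ℝ) ^ γ - ((t:ℝ) - 1) ^ γ) = (k:ℝ) ^ γ := by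
      have h1 : ∑ t ∈ Finset.Icc 1 k, ((t : ℝ) ^ γ - ((t:ℝ) - 1) ^ γ)
          = ∑ i ∈ Finset.range k, (((i+1:ℕ):ℝ) ^ γ - ((i:ℕ):ℝ) ^ γ) := by
        rw [← Finset.Ico_add_one_right_eq_Icc, Finset.sum_Ico_eq_sum_range]
        apply Finset.sum_congr rfl
        intro i _
        push_cast
        ring_nf
      rw [h1, Finset.sum_range_sub (fun i => ((i:ℕ):ℝ) ^ γ)]
      simp [Real.zero_rpow hγ0.ne']
    have : ∑ t ∈ Finset.Icc 1 k, ((t : ℝ) ^ γ - ((t:ℝ) - 1) ^ γ) / γ = (k:ℝ) ^ γ / γ := by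
      rw [← Finset.sum_div, htel]
    rw [this] at hsum
    have : (0:ℝ) ≤ (k:ℝ) ^ (γ - 1) := (Real.rpow_pos_of_pos hk0 _).le
    linarith
  · -- increasing case: split last term
    obtain ⟨m, rfl⟩ : ∃ m, k = m + 1 := ⟨k - 1, (Nat.succ_pred_eq_of_pos hk).symm⟩
    rw [Finset.sum_Icc_succ_top (Nat.le_add_left 1 m)]
    have hlast : ((m + 1 : ℕ) : ℝ) ^ (γ - 1) = ((m+1:ℕ):ℝ) ^ (γ - 1) := rfl
    have hsum : ∑ t ∈ Finset.Icc 1 m, (t : ℝ) ^ (γ - 1) ≤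
        ∑ t ∈ Finset.Icc 1 m, (((t:ℝ) + 1) ^ γ - (t : ℝ) ^ γ) / γ := by
      apply Finset.sum_le_sum
      intro t ht
      have ht1 : 1 ≤ t := (Finset.mem_Icc.mp ht).1
      have hx : (1:ℝ) ≤ (t:ℝ) := by exact_mod_cast ht1
      rw [le_div_iff₀ hγ0]
      have := bern_ge hx hγ1
      linarith
    have htel : ∑ t ∈ Finset.Icc 1 m, (((t:ℝ) + 1) ^ γ - (t : ℝ) ^ γ)
        = ((m:ℝ) + 1) ^ γ - 1 := by
      have h1 : ∑ t ∈ Finset.Icc 1 m, (((t:ℝ) + 1) ^ γ - (t : ℝ) ^ γ)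
          = ∑ i ∈ Finset.range m, (((i+1+1:ℕ):ℝ) ^ γ - ((i+1:ℕ) : ℝ) ^ γ) := by
        rw [← Finset.Ico_add_one_right_eq_Icc, Finset.sum_Ico_eq_sum_range]
        apply Finset.sum_congr rfl
        intro i _
        push_cast
        ring_nf
      rw [h1, Finset.sum_range_sub (fun i => ((i+1:ℕ):ℝ) ^ γ)]
      push_cast
      simp [Real.one_rpow]
    have heq : ∑ t ∈ Finset.Icc 1 m, (((t:ℝ) + 1) ^ γ - (t : ℝ) ^ γ) / γ
        = (((m:ℝ) + 1) ^ γ - 1) / γ := by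
      rw [← Finset.sum_div, htel]
    rw [heq] at hsum
    have hkcast : ((m + 1 : ℕ) : ℝ) = (m:ℝ) + 1 := by push_cast; ring
    rw [hkcast]
    have hdiv : (((m:ℝ) + 1) ^ γ - 1) / γ ≤ ((m:ℝ) + 1) ^ γ / γ := by
      gcongr
      linarith
    linarith

theorem sum_pow_div_stage_rpow_le
    (D α β : ℝ) (hD : 0 < D) (hα0 : 0 ≤ α) (hα1 : α < 1) (hβ0 : 0 < β) (hβ1 : β ≤ 1)
    (k : ℕ) (hk : 1 ≤ k) (s : ℕ → ℕ)
    (hs : ∀ t : ℕ, 1 ≤ t → t ≤ k → (t : ℝ) ≤ (D + 1) * ((s t : ℝ) + 1)) :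
    ∑ t ∈ Finset.Icc 1 k, (t : ℝ) ^ β / ((s t : ℝ) + 1) ^ (1 - α) ≤
      (D + 1) ^ (1 - α) *
        ((k : ℝ) ^ (α + β) / (α + β) + (k : ℝ) ^ (α + β - 1)) := by
  set γ := α + β with hγdef
  have hγ0 : 0 < γ := by positivity
  have hD1 : (0:ℝ) < D + 1 := by linarith
  have h1α : 0 < 1 - α := by linarith
  -- per-term bound
  have hterm : ∀ t ∈ Finset.Icc 1 k,
      (t : ℝ) ^ β / ((s t : ℝ) + 1) ^ (1 - α) ≤ (D + 1) ^ (1 - α) * (t:ℝ) ^ (γ - 1) := by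
    intro t ht
    obtain ⟨ht1, htk⟩ := Finset.mem_Icc.mp ht
    have htpos : (0:ℝ) < (t:ℝ) := by exact_mod_cast ht1
    have hst : (t : ℝ) ≤ (D + 1) * ((s t : ℝ) + 1) := hs t ht1 htk
    have hs1 : (0:ℝ) < (s t : ℝ) + 1 := by positivity
    have hpow : (t:ℝ) ^ (1 - α) ≤ ((D + 1) * ((s t : ℝ) + 1)) ^ (1 - α) :=
      Real.rpow_le_rpow htpos.le hst h1α.le
    rw [Real.mul_rpow hD1.le hs1.le] at hpow
    have hden : (0:ℝ) < ((s t : ℝ) + 1) ^ (1 - α) := Real.rpow_pos_of_pos hs1 _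
    have htβ : (0:ℝ) ≤ (t:ℝ) ^ β := (Real.rpow_pos_of_pos htpos _).le
    rw [div_le_iff₀ hden]
    have key : (D + 1) ^ (1 - α) * (t:ℝ) ^ (γ - 1) * ((s t : ℝ) + 1) ^ (1 - α)
        ≥ (t:ℝ) ^ (γ - 1) * (t:ℝ) ^ (1 - α) := by
      have := mul_le_mul_of_nonneg_left hpow ((Real.rpow_pos_of_pos htpos (γ-1)).le)
      nlinarith [this]
    have hexp : (t:ℝ) ^ (γ - 1) * (t:ℝ) ^ (1 - α) = (t:ℝ) ^ β := by
      rw [← Real.rpow_add htpos]; congr 1; rw [hγdef]; ring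
    linarith [key, hexp.ge, hexp.le]
  calc ∑ t ∈ Finset.Icc 1 k, (t : ℝ) ^ β / ((s t : ℝ) + 1) ^ (1 - α)
      ≤ ∑ t ∈ Finset.Icc 1 k, (D + 1) ^ (1 - α) * (t:ℝ) ^ (γ - 1) :=
        Finset.sum_le_sum hterm
    _ = (D + 1) ^ (1 - α) * ∑ t ∈ Finset.Icc 1 k, (t:ℝ) ^ (γ - 1) := by
        rw [Finset.mul_sum]
    _ ≤ (D + 1) ^ (1 - α) * ((k : ℝ) ^ γ / γ + (k : ℝ) ^ (γ - 1)) := by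
        apply mul_le_mul_of_nonneg_left (sum_rpow_aux γ hγ0 k hk)
        exact (Real.rpow_pos_of_pos hD1 _).le
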